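/- Let c ∈ 𝒞ₙ(A) be a configuration of disjoint little n-cubes indexed by A inside [0,1]ⁿ, with each cube c_a a rectilinear embedding. Define φ(c) to be the complete directed graph on A where the edge between a and b has weight i if i is the smallest coordinate index such that c_a and c_b are separated by a hyperplane {xᵢ = t}, directed from a to b if c_a lies on the side xᵢ < t. Then φ(c) contains no directed cycle of uniform weight, i.e. φ(c) ∈ 𝒢ₙᵉˣᵗ(A). -/
import Mathlib


/-- for a configuration `c` of pairwise disjoint little `n`-cubes in `[0,1]ⁿ`
(the cube `c_a` being the open box `∏ᵢ (v a i, v a i + u a i)`), the separation graph `φ(c)`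
is a complete directed weighted graph (any two distinct cubes are `i`-separated for some `i`)
containing no directed cycle of uniform weight, i.e. `φ(c) ∈ 𝒢ₙᵉˣᵗ(A)`.  Here the edge between
`a` and `b` is weighted by the smallest `i` such that `c_a` and `c_b` are `i`-separated
(`i`-separation of `a` below `b` meaning `v a i + u a i ≤ v b i`), directed towards the cube
which is `i`-above. -/
theorem statement5 {A : Type} {n : ℕ} (v u : A → Fin n → ℝ)
    (hu : ∀ a i, 0 < u a i) (hv : ∀ a i, 0 ≤ v a i) (hv1 : ∀ a i, v a i + u a i ≤ 1)
    (hdisj : ∀ a b, a ≠ b →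
      Disjoint (Set.univ.pi fun i => Set.Ioo (v a i) (v a i + u a i))
        (Set.univ.pi fun i => Set.Ioo (v b i) (v b i + u b i))) :
    (∀ a b, a ≠ b → ∃ i : Fin n, v a i + u a i ≤ v b i ∨ v b i + u b i ≤ v a i) ∧
    ¬ ∃ (k : ℕ) (d : Fin (k + 1) → A) (i : Fin n),
        ∀ j : Fin (k + 1),
          v (d j) i + u (d j) i ≤ v (d (j + 1)) i ∧
          ∀ i' : Fin n, i' < i →
            ¬ (v (d j) i' + u (d j) i' ≤ v (d (j + 1)) i') ∧
            ¬ (v (d (j + 1)) i' + u (d (j + 1)) i' ≤ v (d j) i') := by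
  constructor
  · intro a b hab
    by_contra h
    push_neg at h
    refine Set.not_disjoint_iff.2
      ⟨fun i => (max (v a i) (v b i) + min (v a i + u a i) (v b i + u b i)) / 2, ?_, ?_⟩
      (hdisj a b hab) <;>
    · intro i _
      have h1 := (h i).1
      have h2 := (h i).2
      have l1 := le_max_left (v a i) (v b i)
      have l2 := le_max_right (v a i) (v b i)
      have l3 := min_le_left (v a i + u a i) (v b i + u b i)
      have l4 := min_le_right (v a i + u a i) (v b i + u b i)
      have hm : max (v a i) (v b i) < min (v a i + u a i) (v b i + u b i) := by
        apply lt_min <;> apply max_lt <;> linarith [hu a i, hu b i]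
      constructor <;> simp only [Set.mem_Ioo] <;> linarith
  · rintro ⟨k, d, i, hcyc⟩
    have step : ∀ j : Fin (k + 1), v (d j) i < v (d (j + 1)) i := fun j => by
      have h1 := (hcyc j).1
      have h2 := hu (d j) i
      linarith
    have mono : ∀ m : ℕ, ∀ hm : m < k + 1, v (d 0) i ≤ v (d ⟨m, hm⟩) i := by
      intro m
      induction m with
      | zero => intro hm; rfl
      | succ m ih =>
        intro hm
        have hm' : m < k + 1 := Nat.lt_of_succ_lt hm
        have hs := step ⟨m, hm'⟩
        have heq : (⟨m, hm'⟩ : Fin (k + 1)) + 1 = ⟨m + 1, hm⟩ := by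
          ext
          simp [Fin.add_def, Nat.mod_eq_of_lt hm]
        rw [heq] at hs
        exact le_trans (ih hm') (le_of_lt hs)
    have hlast := step ⟨k, Nat.lt_succ_self k⟩
    have heq : (⟨k, Nat.lt_succ_self k⟩ : Fin (k + 1)) + 1 = 0 := by
      ext
      simp [Fin.add_def]
    rw [heq] at hlast
    have := mono k (Nat.lt_succ_self k)
    linarith
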